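/- Let N ≥ 1, p > 1, and let u be a radial solution on (0,1] of the p-Laplace equation -(r^{N-1}|u_r|^{p-2}u_r)' = r^{N-1} g(u) with u_r < 0, g ≥ 0 nonnegative nondecreasing locally Lipschitz, and g convex with g' ≥ 0, and assume u is semi-stable, i.e. ∫₀¹ r^{N-1} g'(u(r)) ξ(r)² dr ≤ (p-1)∫₀¹ r^{N-1} |u_r(r)|^{p-2} ξ'(r)² dr for all ξ ∈ C_c¹(0,1). Then there is a constant M depending only on N and p such that g'(u(r)) ≤ M |u_r(r)|^{p-2} / r² for all r ∈ (0,1]. -/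

import Mathlib

open Real MeasureTheory Set

noncomputable def myBump : ContDiffBump (2⁻¹ : ℝ) := ⟨4⁻¹, 3⁻¹, by norm_num, by norm_num⟩

lemma bump_exists : ∃ ζ : ℝ → ℝ, ContDiff ℝ 1 ζ ∧ (∀ t, 0 ≤ ζ t) ∧ (∀ t, ζ t ≤ 1) ∧
    (∀ t, t ∉ Icc (6⁻¹:ℝ) (6⁻¹*5) → ζ t = 0) ∧ (∀ t ∈ Icc (4⁻¹:ℝ) (4⁻¹*3), ζ t = 1) := by
  have hin : myBump.rIn = 4⁻¹ := rfl
  have hout : myBump.rOut = 3⁻¹ := rfl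
  refine ⟨myBump, myBump.contDiff, myBump.nonneg', fun t => myBump.le_one, fun t ht => ?_,
    fun t ht => ?_⟩
  · apply myBump.zero_of_le_dist
    rw [Real.dist_eq, hout]
    rcases abs_cases (t - 2⁻¹) with ⟨h1,h2⟩|⟨h1,h2⟩ <;> rw [h1] <;>
      simp only [mem_Icc, not_and_or, not_le] at ht <;> rcases ht with h|h <;> nlinarith
  · apply myBump.one_of_mem_closedBall
    rw [Real.closedBall_eq_Icc, hin]
    constructor <;> [linarith [ht.1]; linarith [ht.2]]

lemma integrableOn_Ioo_of_bounded {f : ℝ → ℝ} {C : ℝ}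
    (hm : AEStronglyMeasurable f (volume.restrict (Ioo (0:ℝ) 1)))
    (hb : ∀ x ∈ Ioo (0:ℝ) 1, |f x| ≤ C) : IntegrableOn f (Ioo (0:ℝ) 1) := by
  refine Integrable.mono' (g := fun _ => C)
    (integrableOn_const (by rw [Real.volume_Ioo]; exact ENNReal.ofReal_ne_top)) hm ?_
  exact (ae_restrict_iff' measurableSet_Ioo).2
    (Filter.Eventually.of_forall fun x hx => by simpa [Real.norm_eq_abs] using hb x hx)

lemma icc_subset : Icc (6⁻¹:ℝ) (6⁻¹*5) ⊆ Ioo (0:ℝ) 1 := by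
  intro t ht; exact ⟨by nlinarith [ht.1], by nlinarith [ht.2]⟩

lemma cov_lemma (β : ℝ) (w : ℝ → ℝ) (hw : ∀ t, t ∉ Icc (6⁻¹:ℝ) (6⁻¹*5) → w t = 0)
    {r : ℝ} (hr0 : 0 < r) (hr1 : r ≤ 1) :
    ∫ s in Ioo (0:ℝ) 1, s ^ β * (w (s/r))^2
      = r ^ (β+1) * ∫ t in Ioo (0:ℝ) 1, t ^ β * (w t)^2 := by
  have hmem : ∀ s : ℝ, w (s/r) ≠ 0 → s ∈ Ioo (0:ℝ) 1 := by
    intro s h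
    have h2 : s / r ∈ Icc (6⁻¹:ℝ) (6⁻¹*5) := by
      by_contra hc; exact h (hw _ hc)
    have h3 : 6⁻¹ * r ≤ s := by
      have := (le_div_iff₀ hr0).1 h2.1; linarith
    have h4 : s ≤ 6⁻¹ * 5 * r := by
      have := (div_le_iff₀ hr0).1 h2.2; linarith
    exact ⟨by nlinarith, by nlinarith⟩
  set Φ : ℝ → ℝ := fun t => (r*t) ^ β * (w t)^2 with hΦ
  have key : ∀ s : ℝ, s ^ β * (w (s/r))^2 = Φ (s/r) := by
    intro s
    simp only [hΦ]
    rw [mul_comm r (s/r), div_mul_cancel₀ _ hr0.ne']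
  have e1 : ∫ s in Ioo (0:ℝ) 1, s ^ β * (w (s/r))^2 = ∫ s : ℝ, Φ (s/r) := by
    rw [setIntegral_eq_integral_of_forall_compl_eq_zero (fun s hs => ?_)]
    · exact integral_congr_ae (Filter.Eventually.of_forall key)
    · rcases eq_or_ne (w (s/r)) 0 with h|h
      · rw [h]; ring
      · exact absurd (hmem s h) hs
  have e2 : (∫ s : ℝ, Φ (s/r)) = r * ∫ t : ℝ, Φ t := by
    rw [MeasureTheory.Measure.integral_comp_div Φ r, smul_eq_mul, abs_of_pos hr0]
  have e3 : (∫ t : ℝ, Φ t) = ∫ t in Ioo (0:ℝ) 1, Φ t := by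
    rw [setIntegral_eq_integral_of_forall_compl_eq_zero (fun t ht => ?_)]
    have : w t = 0 := hw t (fun hmem' => ht (icc_subset hmem'))
    rw [hΦ]; simp [this]
  have e4 : (∫ t in Ioo (0:ℝ) 1, Φ t) = r ^ β * ∫ t in Ioo (0:ℝ) 1, t ^ β * (w t)^2 := by
    rw [← integral_const_mul]
    refine setIntegral_congr_fun measurableSet_Ioo (fun t ht => ?_)
    simp only [hΦ]
    rw [Real.mul_rpow hr0.le ht.1.le]; ring
  rw [e1, e2, e3, e4, Real.rpow_add_one hr0.ne']; ring

lemma contOn_rpow (β : ℝ) : ContinuousOn (fun t : ℝ => t ^ β) (Ioo (0:ℝ) 1) :=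
  fun t ht => (Real.continuousAt_rpow_const t β (Or.inl ht.1.ne')).continuousWithinAt

lemma A1_pos (N : ℝ) (hN : 1 ≤ N) (ζ : ℝ → ℝ) (hζc : Continuous ζ)
    (hζ0 : ∀ t, 0 ≤ ζ t) (hζ1 : ∀ t, ζ t ≤ 1)
    (hone : ∀ t ∈ Icc (4⁻¹:ℝ) (4⁻¹*3), ζ t = 1) :
    0 < ∫ t in Ioo (0:ℝ) 1, t ^ (N-1) * (ζ t)^2 := by
  have hint : IntegrableOn (fun t => t ^ (N-1) * (ζ t)^2) (Ioo (0:ℝ) 1) := by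
    refine integrableOn_Ioo_of_bounded (C := 1)
      (((contOn_rpow (N-1)).mul ((hζc.pow 2).continuousOn)).aestronglyMeasurable
        measurableSet_Ioo) (fun x hx => ?_)
    have h1 : x ^ (N-1) ≤ 1 := Real.rpow_le_one hx.1.le hx.2.le (by linarith)
    have h2 : (ζ x)^2 ≤ 1 := by
      rw [sq_le_one_iff_abs_le_one, abs_le]; exact ⟨by linarith [hζ0 x], hζ1 x⟩
    rw [abs_of_nonneg (mul_nonneg (Real.rpow_nonneg hx.1.le _) (sq_nonneg _))]
    nlinarith [Real.rpow_nonneg hx.1.le (N-1), sq_nonneg (ζ x)]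
  have hsub : Ioo (4⁻¹:ℝ) (4⁻¹*3) ⊆ Ioo (0:ℝ) 1 := by
    intro t ht; constructor <;> [linarith [ht.1]; linarith [ht.2]]
  have step1 : ∫ t in Ioo (4⁻¹:ℝ) (4⁻¹*3), ((4⁻¹:ℝ) ^ (N-1))
      ≤ ∫ t in Ioo (4⁻¹:ℝ) (4⁻¹*3), t ^ (N-1) * (ζ t)^2 := by
    refine setIntegral_mono_on (integrableOn_const ?_) (hint.mono_set hsub)
      measurableSet_Ioo (fun t ht => ?_)
    · rw [Real.volume_Ioo]; exact ENNReal.ofReal_ne_top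
    · rw [hone t ⟨ht.1.le, ht.2.le⟩]
      have : (4⁻¹:ℝ) ^ (N-1) ≤ t ^ (N-1) :=
        Real.rpow_le_rpow (by norm_num) ht.1.le (by linarith)
      nlinarith
  have step0 : (0:ℝ) < ∫ t in Ioo (4⁻¹:ℝ) (4⁻¹*3), ((4⁻¹:ℝ) ^ (N-1)) := by
    rw [setIntegral_const, measureReal_def, Real.volume_Ioo, smul_eq_mul]
    have : (0:ℝ) < (4⁻¹:ℝ) ^ (N-1) := Real.rpow_pos_of_pos (by norm_num) _
    have h2 : (ENNReal.ofReal (4⁻¹*3 - 4⁻¹)).toReal = 1/2 := by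
      rw [ENNReal.toReal_ofReal (by norm_num)]; norm_num
    rw [h2]; linarith
  have step2 : ∫ t in Ioo (4⁻¹:ℝ) (4⁻¹*3), t ^ (N-1) * (ζ t)^2
      ≤ ∫ t in Ioo (0:ℝ) 1, t ^ (N-1) * (ζ t)^2 := by
    refine setIntegral_mono_set hint ?_ (HasSubset.Subset.eventuallyLE hsub)
    exact (ae_restrict_iff' measurableSet_Ioo).2 (Filter.Eventually.of_forall fun x hx =>
      mul_nonneg (Real.rpow_nonneg hx.1.le _) (sq_nonneg _))
  linarith

set_option maxHeartbeats 2000000 in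
/-- Lemma 2.3(ii): for a semi-stable radial solution of `-Δ_p u = g(u)` with
`u_r < 0`, where `g ≥ 0` is nondecreasing, locally Lipschitz and convex, there is a
constant `M` depending only on `N` and `p` with
`g'(u(r)) ≤ M |u_r(r)|^{p-2}/r²` for all `r ∈ (0,1]`. Semi-stability is the
quadratic form inequality
`∫ r^{N-1} g'(u) ξ² ≤ (p-1) ∫ r^{N-1} |u_r|^{p-2} ξ'²` for `ξ ∈ C_c¹(0,1)`. -/
theorem gprime_pointwise_bound
    (N p : ℝ) (hN : 1 ≤ N) (hp : 1 < p) :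
    ∃ M : ℝ, 0 < M ∧
      ∀ (g g' : ℝ → ℝ),
        (∀ x, 0 ≤ g x) → Monotone g → LocallyLipschitz g →
        ConvexOn ℝ univ g →
        (∀ x, HasDerivAt g (g' x) x) →
        (∀ x, 0 ≤ g' x) →
      ∀ (u u' : ℝ → ℝ),
        (∀ r ∈ Ioc (0:ℝ) 1, HasDerivAt u (u' r) r) →
        (∀ r ∈ Ioc (0:ℝ) 1, u' r < 0) →
        (∀ r ∈ Ioc (0:ℝ) 1,
          HasDerivAt (fun s => s ^ (N - 1) * |u' s| ^ (p - 1))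
            (r ^ (N - 1) * g (u r)) r) →
        -- semi-stability
        (∀ ξ : ℝ → ℝ, ContDiff ℝ 1 ξ → tsupport ξ ⊆ Ioo (0:ℝ) 1 →
          ∫ r in Ioo (0:ℝ) 1, r ^ (N - 1) * g' (u r) * (ξ r) ^ 2 ≤
            (p - 1) * ∫ r in Ioo (0:ℝ) 1,
              r ^ (N - 1) * |u' r| ^ (p - 2) * (deriv ξ r) ^ 2) →
        ∀ r ∈ Ioc (0:ℝ) 1, g' (u r) ≤ M * |u' r| ^ (p - 2) / r ^ 2 := by
  obtain ⟨ζ, hζc, hζ0, hζ1, hζsupp, hζone⟩ := bump_exists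
  have hζcont : Continuous ζ := hζc.continuous
  have hdc : Continuous (deriv ζ) := hζc.continuous_deriv le_rfl
  have hd0 : ∀ t, t ∉ Icc (6⁻¹:ℝ) (6⁻¹*5) → deriv ζ t = 0 := by
    intro t ht
    have hopen : IsOpen (Icc (6⁻¹:ℝ) (6⁻¹*5))ᶜ := isClosed_Icc.isOpen_compl
    have heq : ζ =ᶠ[nhds t] (fun _ => (0:ℝ)) :=
      Filter.eventuallyEq_of_mem (hopen.mem_nhds ht) (fun x hx => hζsupp x hx)
    rw [heq.deriv_eq, deriv_const]
  set κ : ℝ := (2:ℝ) ^ N with hκ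
  have hκ1 : 1 ≤ κ := Real.one_le_rpow one_le_two (by linarith)
  set α : ℝ := (N + κ) * |p - 2| / (p - 1) with hα
  have hα0 : 0 ≤ α := div_nonneg (mul_nonneg (by linarith) (abs_nonneg _)) (by linarith)
  set A₁ : ℝ := ∫ t in Ioo (0:ℝ) 1, t ^ (N-1) * (ζ t)^2 with hA₁
  set B₁ : ℝ := ∫ t in Ioo (0:ℝ) 1, t ^ (N-1-α) * (deriv ζ t)^2 with hB₁
  have hA : 0 < A₁ := A1_pos N hN ζ hζcont hζ0 hζ1 hζone
  have hB : 0 ≤ B₁ := setIntegral_nonneg measurableSet_Ioo fun t ht =>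
    mul_nonneg (Real.rpow_nonneg ht.1.le _) (sq_nonneg _)
  have hM0 : 0 ≤ (p-1) * B₁ / A₁ :=
    div_nonneg (mul_nonneg (by linarith) hB) hA.le
  refine ⟨(p-1) * B₁ / A₁ + 1, by linarith, ?_⟩
  intro g g' hg0 hgmono _hglip hgconv hgd hg'0 u u' hu hu'neg hFd hstab r hr
  obtain ⟨hr0, hr1⟩ := hr
  have habs : ∀ s ∈ Ioc (0:ℝ) 1, 0 < |u' s| := fun s hs => abs_pos.2 (hu'neg s hs).ne
  have ucont : ContinuousOn u (Ioc (0:ℝ) 1) :=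
    fun s hs => (hu s hs).continuousAt.continuousWithinAt
  have uanti : AntitoneOn u (Ioc (0:ℝ) 1) := by
    refine antitoneOn_of_deriv_nonpos (convex_Ioc 0 1) ucont (fun x hx => ?_) (fun x hx => ?_)
    · rw [interior_Ioc] at hx
      exact ((hu x (Ioo_subset_Ioc_self hx)).differentiableAt).differentiableWithinAt
    · rw [interior_Ioc] at hx
      rw [(hu x (Ioo_subset_Ioc_self hx)).deriv]
      exact (hu'neg x (Ioo_subset_Ioc_self hx)).le
  have g'mono : Monotone g' := by
    intro a b hab
    have h := hgconv.monotoneOn_deriv (fun x _ => (hgd x).differentiableAt)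
      (mem_univ a) (mem_univ b) hab
    rwa [(hgd a).deriv, (hgd b).deriv] at h
  set F : ℝ → ℝ := fun s => s ^ (N - 1) * |u' s| ^ (p - 1) with hFdef
  have Fpos : ∀ s ∈ Ioc (0:ℝ) 1, 0 < F s := fun s hs =>
    mul_pos (Real.rpow_pos_of_pos hs.1 _) (Real.rpow_pos_of_pos (habs s hs) _)
  have Fcont : ContinuousOn F (Ioc (0:ℝ) 1) :=
    fun s hs => (hFd s hs).continuousAt.continuousWithinAt
  have Fmono : MonotoneOn F (Ioc (0:ℝ) 1) := by
    refine monotoneOn_of_deriv_nonneg (convex_Ioc 0 1) Fcont (fun x hx => ?_) (fun x hx => ?_)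
    · rw [interior_Ioc] at hx
      exact (hFd x (Ioo_subset_Ioc_self hx)).differentiableAt.differentiableWithinAt
    · rw [interior_Ioc] at hx
      rw [(hFd x (Ioo_subset_Ioc_self hx)).deriv]
      exact mul_nonneg (Real.rpow_nonneg hx.1.le _) (hg0 _)
  have hgcont : Continuous g := continuous_iff_continuousAt.2 fun x => (hgd x).continuousAt
  -- step: g(u s) * (s/2)^N ≤ F s
  have hgu : ∀ s ∈ Ioc (0:ℝ) 1, g (u s) * (s/2) ^ N ≤ F s := by
    intro s hs
    have hs0 := hs.1
    have hh : s/2 ≤ s := by linarith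
    have hsub : Icc (s/2) s ⊆ Ioc (0:ℝ) 1 := fun t ht => ⟨by linarith [ht.1], le_trans ht.2 hs.2⟩
    have hcont : ContinuousOn (fun t => t ^ (N-1) * g (u t)) (Icc (s/2) s) := by
      refine ContinuousOn.mul (fun t ht => ?_) (hgcont.comp_continuousOn (ucont.mono hsub))
      exact (Real.continuousAt_rpow_const t (N-1)
        (Or.inl (by linarith [ht.1] : t ≠ 0))).continuousWithinAt
    have hftc : ∫ t in (s/2)..s, t ^ (N-1) * g (u t) = F s - F (s/2) := by
      refine intervalIntegral.integral_eq_sub_of_hasDerivAt (fun t ht => ?_) ?_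
      · rw [uIcc_of_le hh] at ht; exact hFd t (hsub ht)
      · apply ContinuousOn.intervalIntegrable
        rwa [uIcc_of_le hh]
    have hmono2 : ∫ t in (s/2)..s, ((s/2) ^ (N-1) * g (u s))
        ≤ ∫ t in (s/2)..s, t ^ (N-1) * g (u t) := by
      refine intervalIntegral.integral_mono_on hh intervalIntegrable_const
        (hcont.intervalIntegrable_of_Icc hh) (fun t ht => ?_)
      have h1 : (s/2) ^ (N-1) ≤ t ^ (N-1) :=
        Real.rpow_le_rpow (by linarith) ht.1 (by linarith)
      have h2 : g (u s) ≤ g (u t) := hgmono (uanti (hsub ht) hs ht.2)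
      exact mul_le_mul h1 h2 (hg0 _) (Real.rpow_nonneg (by linarith [ht.1]) _)
    rw [intervalIntegral.integral_const, hftc] at hmono2
    have hFhalf : 0 ≤ F (s/2) := (Fpos _ (hsub ⟨le_refl _, hh⟩)).le
    have hpow : (s/2) ^ N = (s/2) ^ (N-1) * (s/2) := by
      rw [← Real.rpow_add_one (by positivity : (s/2:ℝ) ≠ 0) (N-1)]; norm_num
    have : g (u s) * (s/2)^N = (s - s/2) • ((s/2)^(N-1) * g (u s)) := by
      rw [smul_eq_mul, hpow]; ring
    linarith [hmono2]
  -- antitone auxiliary function for the lower gradient decay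
  have hDanti : AntitoneOn (fun s => F s * s ^ (1 - N - κ)) (Ioc (0:ℝ) 1) := by
    have hder : ∀ x ∈ Ioo (0:ℝ) 1, HasDerivAt (fun s => F s * s ^ (1 - N - κ))
        (x ^ (N-1) * g (u x) * x ^ (1 - N - κ) + F x * ((1 - N - κ) * x ^ (1 - N - κ - 1))) x := by
      intro x hx
      exact (hFd x (Ioo_subset_Ioc_self hx)).mul
        (Real.hasDerivAt_rpow_const (Or.inl hx.1.ne'))
    refine antitoneOn_of_deriv_nonpos (convex_Ioc 0 1)
      (Fcont.mul (fun x hx =>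
        (Real.continuousAt_rpow_const x _ (Or.inl hx.1.ne')).continuousWithinAt))
      (fun x hx => ?_) (fun x hx => ?_)
    · rw [interior_Ioc] at hx
      exact (hder x hx).differentiableAt.differentiableWithinAt
    · rw [interior_Ioc] at hx
      rw [(hder x hx).deriv]
      have hx0 : 0 < x := hx.1
      have hxI : x ∈ Ioc (0:ℝ) 1 := Ioo_subset_Ioc_self hx
      have hκ0 : (0:ℝ) < κ := by linarith
      have h1 : g (u x) * x ^ N ≤ κ * F x := by
        have h2 := hgu x hxI
        have h3 : (x/2) ^ N = x ^ N / κ := by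
          rw [hκ, Real.div_rpow hx0.le (by norm_num)]
        rw [h3] at h2
        have := mul_le_mul_of_nonneg_right h2 hκ0.le
        calc g (u x) * x ^ N = g (u x) * (x ^ N / κ) * κ := by field_simp
        _ ≤ F x * κ := this
        _ = κ * F x := mul_comm _ _
      have h4 : x ^ (N-1) * x ^ (1 - N - κ) = x ^ N * x ^ (1 - N - κ - 1) := by
        rw [← Real.rpow_add hx0, ← Real.rpow_add hx0]; ring_nf
      have h5 : x ^ (N-1) * g (u x) * x ^ (1 - N - κ) ≤ κ * F x * x ^ (1 - N - κ - 1) := by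
        calc x ^ (N-1) * g (u x) * x ^ (1 - N - κ)
            = (g (u x) * x ^ N) * x ^ (1 - N - κ - 1) := by
              rw [mul_comm (x ^ (N-1)) (g (u x)), mul_assoc, h4]; ring
        _ ≤ (κ * F x) * x ^ (1 - N - κ - 1) :=
            mul_le_mul_of_nonneg_right h1 (Real.rpow_nonneg hx0.le _)
      have hFx : 0 ≤ F x := (Fpos x hxI).le
      have hxe : 0 ≤ x ^ (1 - N - κ - 1) := Real.rpow_nonneg hx0.le _
      nlinarith [mul_nonneg hFx hxe]
  -- key pointwise gradient comparison
  have hkey : ∀ s, 0 < s → s ≤ r → |u' s| ^ (p-2) ≤ (r/s) ^ α * |u' r| ^ (p-2) := by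
    intro s hs0 hsr
    have hsI : s ∈ Ioc (0:ℝ) 1 := ⟨hs0, hsr.trans hr1⟩
    have hrI : r ∈ Ioc (0:ℝ) 1 := ⟨hr0, hr1⟩
    have ha0 : 0 < |u' s| := habs s hsI
    have hb0 : 0 < |u' r| := habs r hrI
    have hρ0 : 0 < r / s := div_pos hr0 hs0
    have hρ : 1 ≤ r / s := (one_le_div hs0).2 hsr
    have hi : s ^ (N-1) * |u' s| ^ (p-1) ≤ r ^ (N-1) * |u' r| ^ (p-1) := Fmono hsI hrI hsr
    have hii : r ^ (N-1) * |u' r| ^ (p-1) * r ^ (1-N-κ)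
        ≤ s ^ (N-1) * |u' s| ^ (p-1) * s ^ (1-N-κ) := hDanti hsI hrI hsr
    have hi' : |u' s| ^ (p-1) ≤ (r/s) ^ (N-1) * |u' r| ^ (p-1) := by
      rw [Real.div_rpow hr0.le hs0.le, div_mul_eq_mul_div,
        le_div_iff₀ (Real.rpow_pos_of_pos hs0 _)]
      calc |u' s| ^ (p-1) * s ^ (N-1) = s ^ (N-1) * |u' s| ^ (p-1) := mul_comm _ _
      _ ≤ r ^ (N-1) * |u' r| ^ (p-1) := hi
    have hii' : (r/s) ^ (-κ) * |u' r| ^ (p-1) ≤ |u' s| ^ (p-1) := by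
      have e1 : ∀ x:ℝ, 0 < x → x ^ (N-1) * x ^ (1-N-κ) = x ^ (-κ) := by
        intro x hx; rw [← Real.rpow_add hx]; ring_nf
      have h2 : r ^ (-κ) * |u' r| ^ (p-1) ≤ s ^ (-κ) * |u' s| ^ (p-1) := by
        calc r ^ (-κ) * |u' r| ^ (p-1)
            = r ^ (N-1) * |u' r| ^ (p-1) * r ^ (1-N-κ) := by rw [← e1 r hr0]; ring
        _ ≤ s ^ (N-1) * |u' s| ^ (p-1) * s ^ (1-N-κ) := hii
        _ = s ^ (-κ) * |u' s| ^ (p-1) := by rw [← e1 s hs0]; ring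
      rw [Real.div_rpow hr0.le hs0.le, div_mul_eq_mul_div,
        div_le_iff₀ (Real.rpow_pos_of_pos hs0 _)]
      calc r ^ (-κ) * |u' r| ^ (p-1) ≤ s ^ (-κ) * |u' s| ^ (p-1) := h2
      _ = |u' s| ^ (p-1) * s ^ (-κ) := mul_comm _ _
    have hpq : (p-1) * ((p-2)/(p-1)) = p - 2 := by
      rw [mul_comm, div_mul_cancel₀ _ (by linarith : p - 1 ≠ 0)]
    have haq : |u' s| ^ (p-2) = (|u' s| ^ (p-1)) ^ ((p-2)/(p-1)) := by
      rw [← Real.rpow_mul ha0.le, hpq]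
    rcases le_or_gt 2 p with hp2 | hp2
    · have hq0 : 0 ≤ (p-2)/(p-1) := div_nonneg (by linarith) (by linarith)
      have step : (|u' s| ^ (p-1)) ^ ((p-2)/(p-1))
          ≤ ((r/s) ^ (N-1) * |u' r| ^ (p-1)) ^ ((p-2)/(p-1)) :=
        Real.rpow_le_rpow (Real.rpow_nonneg ha0.le _) hi' hq0
      have expand : ((r/s) ^ (N-1) * |u' r| ^ (p-1)) ^ ((p-2)/(p-1))
          = (r/s) ^ ((N-1)*((p-2)/(p-1))) * |u' r| ^ (p-2) := by
        rw [Real.mul_rpow (Real.rpow_nonneg hρ0.le _) (Real.rpow_nonneg hb0.le _),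
          ← Real.rpow_mul hρ0.le, ← Real.rpow_mul hb0.le, hpq]
      have hexp : (N-1)*((p-2)/(p-1)) ≤ α := by
        have h1 : (N-1)*(p-2) ≤ (N+κ)*(p-2) := by nlinarith
        calc (N-1)*((p-2)/(p-1)) = (N-1)*(p-2)/(p-1) := by ring
        _ ≤ (N+κ)*(p-2)/(p-1) := by
            apply div_le_div_of_nonneg_right h1 (by linarith)
        _ = α := by rw [hα, abs_of_nonneg (by linarith : (0:ℝ) ≤ p - 2)]
      calc |u' s| ^ (p-2) = (|u' s| ^ (p-1)) ^ ((p-2)/(p-1)) := haq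
      _ ≤ (r/s) ^ ((N-1)*((p-2)/(p-1))) * |u' r| ^ (p-2) := by rw [← expand]; exact step
      _ ≤ (r/s) ^ α * |u' r| ^ (p-2) :=
          mul_le_mul_of_nonneg_right (Real.rpow_le_rpow_of_exponent_le hρ hexp)
            (Real.rpow_nonneg hb0.le _)
    · have hq0 : (p-2)/(p-1) ≤ 0 :=
        div_nonpos_of_nonpos_of_nonneg (by linarith) (by linarith)
      have hxpos : 0 < (r/s) ^ (-κ) * |u' r| ^ (p-1) :=
        mul_pos (Real.rpow_pos_of_pos hρ0 _) (Real.rpow_pos_of_pos hb0 _)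
      have step : (|u' s| ^ (p-1)) ^ ((p-2)/(p-1))
          ≤ ((r/s) ^ (-κ) * |u' r| ^ (p-1)) ^ ((p-2)/(p-1)) :=
        Real.rpow_le_rpow_of_nonpos hxpos hii' hq0
      have expand : ((r/s) ^ (-κ) * |u' r| ^ (p-1)) ^ ((p-2)/(p-1))
          = (r/s) ^ (-κ*((p-2)/(p-1))) * |u' r| ^ (p-2) := by
        rw [Real.mul_rpow (Real.rpow_nonneg hρ0.le _) (Real.rpow_nonneg hb0.le _),
          ← Real.rpow_mul hρ0.le, ← Real.rpow_mul hb0.le, hpq]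
      have hexp : -κ*((p-2)/(p-1)) ≤ α := by
        have h1 : -κ*(p-2) ≤ (N+κ)*(2-p) := by nlinarith
        calc -κ*((p-2)/(p-1)) = (-κ*(p-2))/(p-1) := by ring
        _ ≤ ((N+κ)*(2-p))/(p-1) := by
            apply div_le_div_of_nonneg_right h1 (by linarith)
        _ = α := by rw [hα, abs_of_nonpos (by linarith : p - 2 ≤ 0)]; ring_nf
      calc |u' s| ^ (p-2) = (|u' s| ^ (p-1)) ^ ((p-2)/(p-1)) := haq
      _ ≤ (r/s) ^ (-κ*((p-2)/(p-1))) * |u' r| ^ (p-2) := by rw [← expand]; exact step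
      _ ≤ (r/s) ^ α * |u' r| ^ (p-2) :=
          mul_le_mul_of_nonneg_right (Real.rpow_le_rpow_of_exponent_le hρ hexp)
            (Real.rpow_nonneg hb0.le _)
  -- test function
  set ξ : ℝ → ℝ := fun s => ζ (s / r) with hξ
  have hξcd : ContDiff ℝ 1 ξ := hζc.comp (contDiff_id.div_const r)
  have hξd : ∀ s, HasDerivAt ξ (deriv ζ (s/r) * r⁻¹) s := by
    intro s
    have h1 : HasDerivAt ζ (deriv ζ (s/r)) (s/r) :=
      ((hζc.differentiable one_ne_zero) _).hasDerivAt
    have h2 : HasDerivAt (fun y : ℝ => y / r) (1/r) s := (hasDerivAt_id s).div_const r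
    have := HasDerivAt.comp s h1 h2
    simpa [hξ, Function.comp_def, one_div] using this
  have hξderiv : ∀ s, deriv ξ s = deriv ζ (s/r) * r⁻¹ := fun s => (hξd s).deriv
  have hrange : ∀ (v : ℝ → ℝ), (∀ t, t ∉ Icc (6⁻¹:ℝ) (6⁻¹*5) → v t = 0) →
      ∀ s : ℝ, v (s/r) ≠ 0 → 6⁻¹ * r ≤ s ∧ s ≤ 6⁻¹*5*r := by
    intro v hv s hne
    have h2 : s / r ∈ Icc (6⁻¹:ℝ) (6⁻¹*5) := by by_contra hc; exact hne (hv _ hc)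
    constructor
    · have := (le_div_iff₀ hr0).1 h2.1; linarith
    · have := (div_le_iff₀ hr0).1 h2.2; linarith
  have hξsupp : tsupport ξ ⊆ Ioo (0:ℝ) 1 := by
    have hclosed : IsClosed ((fun s : ℝ => s / r) ⁻¹' (Icc (6⁻¹:ℝ) (6⁻¹*5))) :=
      isClosed_Icc.preimage (continuous_id.div_const r)
    have hsub : Function.support ξ ⊆ (fun s : ℝ => s / r) ⁻¹' (Icc (6⁻¹:ℝ) (6⁻¹*5)) := by
      intro s hs
      by_contra hc
      exact hs (hζsupp _ hc)
    refine (closure_minimal hsub hclosed).trans ?_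
    intro s hs
    simp only [mem_preimage, mem_Icc] at hs
    have h3 : 6⁻¹ * r ≤ s := by have := (le_div_iff₀ hr0).1 hs.1; linarith
    have h4 : s ≤ 6⁻¹*5*r := by have := (div_le_iff₀ hr0).1 hs.2; linarith
    exact ⟨by nlinarith, by nlinarith⟩
  -- integrability of the stability LHS integrand
  have hmeasL : AEStronglyMeasurable (fun s => s ^ (N-1) * g' (u s) * (ξ s)^2)
      (volume.restrict (Ioo (0:ℝ) 1)) := by
    have h1 : AEMeasurable u (volume.restrict (Ioo (0:ℝ) 1)) :=
      (ucont.mono Ioo_subset_Ioc_self).aemeasurable measurableSet_Ioo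
    have h2 : AEMeasurable (fun s => g' (u s)) (volume.restrict (Ioo (0:ℝ) 1)) :=
      g'mono.measurable.comp_aemeasurable h1
    exact (((contOn_rpow (N-1)).aestronglyMeasurable measurableSet_Ioo).mul
      h2.aestronglyMeasurable).mul ((hξcd.continuous.pow 2).aestronglyMeasurable)
  have hintL : IntegrableOn (fun s => s ^ (N-1) * g' (u s) * (ξ s)^2) (Ioo (0:ℝ) 1) := by
    refine integrableOn_Ioo_of_bounded (C := g' (u (6⁻¹*r))) hmeasL (fun s hs => ?_)
    rcases eq_or_ne (ζ (s/r)) 0 with h|h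
    · have hz : ξ s = 0 := by rw [hξ]; exact h
      rw [hz]
      simpa using hg'0 (u (6⁻¹*r))
    · obtain ⟨h3, h4⟩ := hrange ζ hζsupp s h
      have hsI : s ∈ Ioc (0:ℝ) 1 := ⟨hs.1, hs.2.le⟩
      have h6I : (6⁻¹*r) ∈ Ioc (0:ℝ) 1 := ⟨by linarith, by linarith⟩
      have hg'le : g' (u s) ≤ g' (u (6⁻¹*r)) := g'mono (uanti h6I hsI h3)
      have h5 : s ^ (N-1) ≤ 1 := Real.rpow_le_one hs.1.le hs.2.le (by linarith)
      have h6 : (ξ s)^2 ≤ 1 := by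
        rw [hξ, sq_le_one_iff_abs_le_one, abs_le]
        exact ⟨by linarith [hζ0 (s/r)], hζ1 (s/r)⟩
      rw [abs_of_nonneg (mul_nonneg (mul_nonneg (Real.rpow_nonneg hs.1.le _) (hg'0 _))
        (sq_nonneg _))]
      have t1 : s ^ (N-1) * g' (u s) ≤ 1 * g' (u (6⁻¹*r)) :=
        mul_le_mul h5 hg'le (hg'0 _) zero_le_one
      calc s ^ (N-1) * g' (u s) * (ξ s)^2 ≤ (1 * g' (u (6⁻¹*r))) * 1 :=
          mul_le_mul t1 h6 (sq_nonneg _) (by simpa using hg'0 (u (6⁻¹*r)))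
      _ = g' (u (6⁻¹*r)) := by ring
  -- step 1 : lower bound for the stability LHS
  have hcov1 : ∫ s in Ioo (0:ℝ) 1, s ^ (N-1) * (ζ (s/r))^2 = r ^ ((N-1)+1) * A₁ :=
    cov_lemma (N-1) ζ hζsupp hr0 hr1
  have step1 : g' (u r) * (r ^ ((N-1)+1) * A₁)
      ≤ ∫ s in Ioo (0:ℝ) 1, s ^ (N-1) * g' (u s) * (ξ s)^2 := by
    rw [← hcov1, ← integral_const_mul]
    refine integral_mono_of_nonneg ?_ hintL ?_
    · refine (ae_restrict_iff' measurableSet_Ioo).2 (Filter.Eventually.of_forall fun s hs => ?_)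
      exact mul_nonneg (hg'0 _) (mul_nonneg (Real.rpow_nonneg hs.1.le _) (sq_nonneg _))
    · refine (ae_restrict_iff' measurableSet_Ioo).2 (Filter.Eventually.of_forall fun s hs => ?_)
      rcases eq_or_ne (ζ (s/r)) 0 with h|h
      · have hz : ξ s = 0 := by rw [hξ]; exact h
        simp only [h, hz]
        ring_nf
        exact le_refl _
      · obtain ⟨h3, h4⟩ := hrange ζ hζsupp s h
        have hsI : s ∈ Ioc (0:ℝ) 1 := ⟨hs.1, hs.2.le⟩
        have hsle : s ≤ r := by linarith
        have hg'le : g' (u r) ≤ g' (u s) := g'mono (uanti hsI ⟨hr0, hr1⟩ hsle)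
        have hnn : 0 ≤ s ^ (N-1) * (ζ (s/r))^2 :=
          mul_nonneg (Real.rpow_nonneg hs.1.le _) (sq_nonneg _)
        calc g' (u r) * (s ^ (N-1) * (ζ (s/r))^2)
            ≤ g' (u s) * (s ^ (N-1) * (ζ (s/r))^2) := mul_le_mul_of_nonneg_right hg'le hnn
        _ = s ^ (N-1) * g' (u s) * (ξ s)^2 := by rw [hξ]; ring
  -- step 3 : upper bound for the stability RHS
  have hcov2 : ∫ s in Ioo (0:ℝ) 1, s ^ (N-1-α) * (deriv ζ (s/r))^2
      = r ^ ((N-1-α)+1) * B₁ := cov_lemma (N-1-α) (deriv ζ) hd0 hr0 hr1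
  have hcs : HasCompactSupport (deriv ζ) := HasCompactSupport.intro isCompact_Icc hd0
  obtain ⟨Cd, hCd⟩ := hcs.exists_bound_of_continuous hdc
  have hCd0 : 0 ≤ Cd := le_trans (norm_nonneg _) (hCd 0)
  have hc₃0 : 0 ≤ |u' r| ^ (p-2) * r ^ α / r^2 := by positivity
  have hK1 : (0:ℝ) ≤ max ((6⁻¹*r) ^ (N-1-α)) 1 := le_trans zero_le_one (le_max_right _ _)
  have hintJ : IntegrableOn
      (fun s => (|u' r| ^ (p-2) * r ^ α / r^2) * (s ^ (N-1-α) * (deriv ζ (s/r))^2))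
      (Ioo (0:ℝ) 1) := by
    refine integrableOn_Ioo_of_bounded
      (C := (|u' r| ^ (p-2) * r ^ α / r^2) * (max ((6⁻¹*r) ^ (N-1-α)) 1 * Cd^2)) ?_ ?_
    · exact (((contOn_rpow (N-1-α)).aestronglyMeasurable measurableSet_Ioo).mul
        (((hdc.comp (continuous_id.div_const r)).pow 2).aestronglyMeasurable)).const_mul _
    · intro s hs
      rcases eq_or_ne (deriv ζ (s/r)) 0 with h|h
      · rw [h]
        have hC : 0 ≤ (|u' r| ^ (p-2) * r ^ α / r^2) * (max ((6⁻¹*r) ^ (N-1-α)) 1 * Cd^2) :=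
          mul_nonneg hc₃0 (mul_nonneg hK1 (sq_nonneg _))
        simpa using hC
      · obtain ⟨h3, h4⟩ := hrange (deriv ζ) hd0 s h
        have hse : s ^ (N-1-α) ≤ max ((6⁻¹*r) ^ (N-1-α)) 1 := by
          rcases le_or_gt 0 (N-1-α) with he|he
          · exact le_trans (Real.rpow_le_one hs.1.le hs.2.le he) (le_max_right _ _)
          · exact le_trans
              (Real.rpow_le_rpow_of_nonpos (by linarith : (0:ℝ) < 6⁻¹*r) h3 he.le)
              (le_max_left _ _)
        have hd2 : (deriv ζ (s/r))^2 ≤ Cd^2 := by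
          have h5 := hCd (s/r)
          rw [Real.norm_eq_abs] at h5
          calc (deriv ζ (s/r))^2 = |deriv ζ (s/r)|^2 := (sq_abs _).symm
          _ ≤ Cd^2 := pow_le_pow_left₀ (abs_nonneg _) h5 2
        rw [abs_of_nonneg (mul_nonneg hc₃0
          (mul_nonneg (Real.rpow_nonneg hs.1.le _) (sq_nonneg _)))]
        refine mul_le_mul_of_nonneg_left ?_ hc₃0
        exact mul_le_mul hse hd2 (sq_nonneg _) hK1
  have step3 : (∫ s in Ioo (0:ℝ) 1, s ^ (N-1) * |u' s| ^ (p-2) * (deriv ξ s)^2)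
      ≤ (|u' r| ^ (p-2) * r ^ α / r^2) * (r ^ ((N-1-α)+1) * B₁) := by
    rw [← hcov2, ← integral_const_mul]
    refine integral_mono_of_nonneg ?_ hintJ ?_
    · refine (ae_restrict_iff' measurableSet_Ioo).2 (Filter.Eventually.of_forall fun s hs => ?_)
      exact mul_nonneg (mul_nonneg (Real.rpow_nonneg hs.1.le _)
        (Real.rpow_nonneg (abs_nonneg _) _)) (sq_nonneg _)
    · refine (ae_restrict_iff' measurableSet_Ioo).2 (Filter.Eventually.of_forall fun s hs => ?_)
      show s ^ (N-1) * |u' s| ^ (p-2) * (deriv ξ s)^2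
        ≤ (|u' r| ^ (p-2) * r ^ α / r^2) * (s ^ (N-1-α) * (deriv ζ (s/r))^2)
      rw [hξderiv s]
      rcases eq_or_ne (deriv ζ (s/r)) 0 with h|h
      · rw [h]
        simp
      · obtain ⟨h3, h4⟩ := hrange (deriv ζ) hd0 s h
        have hsle : s ≤ r := by linarith
        have hk := hkey s hs.1 hsle
        have hfac : 0 ≤ s ^ (N-1) * (deriv ζ (s/r) * r⁻¹)^2 := by
          have := Real.rpow_nonneg hs.1.le (N-1); positivity
        calc s ^ (N-1) * |u' s| ^ (p-2) * (deriv ζ (s/r) * r⁻¹)^2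
            = (s ^ (N-1) * (deriv ζ (s/r) * r⁻¹)^2) * |u' s| ^ (p-2) := by ring
        _ ≤ (s ^ (N-1) * (deriv ζ (s/r) * r⁻¹)^2) * ((r/s) ^ α * |u' r| ^ (p-2)) :=
            mul_le_mul_of_nonneg_left hk hfac
        _ = (|u' r| ^ (p-2) * r ^ α / r^2) * (s ^ (N-1-α) * (deriv ζ (s/r))^2) := by
            rw [Real.div_rpow hr0.le hs.1.le, Real.rpow_sub hs.1 (N-1) α]
            have hsα : s ^ α ≠ 0 := (Real.rpow_pos_of_pos hs.1 α).ne'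
            generalize s ^ α = P at hsα ⊢
            generalize r ^ α = Q
            generalize s ^ (N-1) = S
            generalize |u' s| ^ (p-2) = X
            generalize |u' r| ^ (p-2) = Y
            field_simp
  -- combine via the stability inequality
  have hstab' := hstab ξ hξcd hξsupp
  have hfin : g' (u r) * (r ^ ((N-1)+1) * A₁)
      ≤ (p-1) * ((|u' r| ^ (p-2) * r ^ α / r^2) * (r ^ ((N-1-α)+1) * B₁)) :=
    le_trans step1 (le_trans hstab' (mul_le_mul_of_nonneg_left step3 (by linarith)))
  have hPQ : r ^ α * r ^ ((N-1-α)+1) = r ^ ((N-1)+1) := by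
    rw [← Real.rpow_add hr0]; ring_nf
  have hr2 : (0:ℝ) < r^2 := by positivity
  have hS : (0:ℝ) < r ^ ((N-1)+1) * A₁ := mul_pos (Real.rpow_pos_of_pos hr0 _) hA
  have key2 : g' (u r) ≤ (p-1) * B₁ / A₁ * (|u' r| ^ (p-2) / r^2) := by
    have h2 : (p-1) * ((|u' r| ^ (p-2) * r ^ α / r^2) * (r ^ ((N-1-α)+1) * B₁))
        = ((p-1) * B₁ / A₁ * (|u' r| ^ (p-2) / r^2)) * (r ^ ((N-1)+1) * A₁) := by
      rw [← hPQ]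
      field_simp
    rw [h2] at hfin
    exact le_of_mul_le_mul_right hfin hS
  have hX : 0 ≤ |u' r| ^ (p-2) / r^2 := by positivity
  calc g' (u r) ≤ (p-1) * B₁ / A₁ * (|u' r| ^ (p-2) / r^2) := key2
  _ ≤ ((p-1) * B₁ / A₁ + 1) * (|u' r| ^ (p-2) / r^2) :=
      mul_le_mul_of_nonneg_right (by linarith) hX
  _ = ((p-1) * B₁ / A₁ + 1) * |u' r| ^ (p-2) / r^2 := by ring
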